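/- For all g, g' ∈ SL_n(ℂ), the following two inequalities hold for the Euclidean norm on ℝⁿ: ‖μ(gg') − μ(g)‖ ≤ ‖μ(g')‖ and ‖μ(gg') − μ(g')‖ ≤ ‖μ(g)‖, where μ(g) = (log σ₁(g), …, log σ_n(g)) ∈ ℝⁿ. -/

import Mathlib

/-!
STATEMENT 12: for g, g' ∈ SL_n(ℂ), ‖μ(gg') − μ(g)‖ ≤ ‖μ(g')‖ and
‖μ(gg') − μ(g')‖ ≤ ‖μ(g)‖ for the Euclidean norm on ℝⁿ, where
μ(g) = (log σ₁(g), …, log σ_n(g)) is the vector of logarithms of the singular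
values of g in decreasing order.
-/

open Matrix

/-- The Cartan projection μ(g) = (log σ₁(g), …, log σ_n(g)) ∈ ℝⁿ (0-indexed:
`cartanProj g i = log σ_{i+1}(g)`), where σ₁(g) ≥ … ≥ σ_n(g) are the singular
values of g, i.e. the square roots of the eigenvalues of gᴴg (gᴴ the conjugate transpose)
listed in decreasing order with multiplicity.  It is valued in `EuclideanSpace ℝ
(Fin n)`, i.e. ℝⁿ with the Euclidean norm. -/
noncomputable def cartanProj {n : ℕ} (g : Matrix (Fin n) (Fin n) ℂ) :
    EuclideanSpace ℝ (Fin n) :=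
  WithLp.toLp 2 fun i =>
    Real.log (Real.sqrt
      (((Matrix.isHermitian_conjTranspose_mul_self g).eigenvalues ∘
        (Tuple.sort (Matrix.isHermitian_conjTranspose_mul_self g).eigenvalues)) i.rev))

open Matrix Finset Polynomial

namespace CP
variable {n : ℕ}

/-- descending sorted eigenvalues of a Hermitian matrix -/
noncomputable def lam {A : Matrix (Fin n) (Fin n) ℂ} (hA : A.IsHermitian) : Fin n → ℝ :=
  fun i => (hA.eigenvalues ∘ (Tuple.sort hA.eigenvalues)) i.rev

lemma lam_antitone {A : Matrix (Fin n) (Fin n) ℂ} (hA : A.IsHermitian) : Antitone (lam hA) :=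
  fun i j hij => Tuple.monotone_sort hA.eigenvalues (Fin.rev_le_rev.2 hij)

lemma lam_multiset {A : Matrix (Fin n) (Fin n) ℂ} (hA : A.IsHermitian) :
    Multiset.map (lam hA) univ.val = Multiset.map hA.eigenvalues univ.val := by
  have : lam hA = hA.eigenvalues ∘ ((Fin.revPerm.trans (Tuple.sort hA.eigenvalues)) : Equiv.Perm (Fin n)) := by
    funext i; rfl
  rw [this]
  have h2 : (Multiset.map (⇑(Fin.revPerm.trans (Tuple.sort hA.eigenvalues))) univ.val) = univ.val := by
    have := Finset.map_univ_equiv ((Fin.revPerm.trans (Tuple.sort hA.eigenvalues)) : Equiv.Perm (Fin n))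
    calc (Multiset.map (⇑(Fin.revPerm.trans (Tuple.sort hA.eigenvalues))) univ.val)
        = (univ.map ((Fin.revPerm.trans (Tuple.sort hA.eigenvalues)).toEmbedding)).val := rfl
      _ = univ.val := by rw [this]
  calc Multiset.map (hA.eigenvalues ∘ _) univ.val
      = Multiset.map hA.eigenvalues (Multiset.map _ univ.val) := by rw [Multiset.map_map]
    _ = _ := by rw [h2]

lemma antitone_eq_of_multiset {f g : Fin n → ℝ} (hf : Antitone f) (hg : Antitone g)
    (h : Multiset.map f univ.val = Multiset.map g univ.val) : f = g := by
  rw [Fin.univ_val_map, Fin.univ_val_map, Multiset.coe_eq_coe] at h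
  have : IsAntisymm ℝ (· ≥ ·) := ⟨fun a b h1 h2 => le_antisymm h2 h1⟩
  have hsf : (List.ofFn f).SortedGE :=
    List.sortedGE_ofFn_iff.2 hf
  have hsg : (List.ofFn g).SortedGE :=
    List.sortedGE_ofFn_iff.2 hg
  exact List.ofFn_injective (List.Perm.eq_of_sortedGE hsf hsg h)

lemma lam_eq_of_multiset {A B : Matrix (Fin n) (Fin n) ℂ} (hA : A.IsHermitian)
    (hB : B.IsHermitian)
    (h : Multiset.map hA.eigenvalues univ.val = Multiset.map hB.eigenvalues univ.val) :
    lam hA = lam hB :=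
  antitone_eq_of_multiset (lam_antitone hA) (lam_antitone hB)
    (by rw [lam_multiset, lam_multiset, h])

/-- charpoly of a diagonal matrix -/
lemma charpoly_diagonal {R : Type*} [CommRing R] (d : Fin n → R) :
    (diagonal d).charpoly = ∏ i, (X - C (d i)) := by
  have : (diagonal d).charmatrix = diagonal (fun i => (X : R[X]) - C (d i)) := by
    ext i j
    by_cases h : i = j
    · subst h; simp [charmatrix_apply, diagonal_apply_eq]
    · simp [charmatrix_apply, diagonal_apply_ne _ h, h]
  rw [Matrix.charpoly, this, det_diagonal]

lemma charpoly_unit_conj {R : Type*} [CommRing R] (U : Matrix (Fin n) (Fin n) R)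
    (V : Matrix (Fin n) (Fin n) R) (hUV : U * V = 1) (hVU : V * U = 1)
    (A : Matrix (Fin n) (Fin n) R) : (U * A * V).charpoly = A.charpoly := by
  have hcm : (U * A * V).charmatrix =
      U.map Polynomial.C * A.charmatrix * V.map Polynomial.C := by
    have hdiag : ∀ (M : Matrix (Fin n) (Fin n) R[X]),
        diagonal (fun _ => (X:R[X])) * M = M * diagonal (fun _ => (X:R[X])) := by
      intro M; ext i j
      simp [diagonal_mul, mul_diagonal, mul_comm]
    have h2 : (U * A * V).charmatrix = diagonal (fun _ => (X:R[X])) - (U * A * V).map Polynomial.C := by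
      ext i j : 2; simp [charmatrix_apply, Matrix.sub_apply, -Matrix.map_mul]
    have h3 : A.charmatrix = diagonal (fun _ => (X:R[X])) - A.map Polynomial.C := by
      ext i j; simp [charmatrix_apply]
    have hmapmul : ∀ (P Q : Matrix (Fin n) (Fin n) R),
        (P * Q).map Polynomial.C = P.map Polynomial.C * Q.map Polynomial.C := by
      intro P Q; exact Matrix.map_mul (f := Polynomial.C)
    rw [h2, h3]
    rw [mul_sub, sub_mul]
    congr 1
    · rw [← hdiag, mul_assoc, ← hmapmul, hUV]
      simp
    · rw [hmapmul, hmapmul, mul_assoc]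
  rw [Matrix.charpoly, Matrix.charpoly, hcm]
  rw [det_mul, det_mul]
  have : (U.map Polynomial.C).det * (V.map Polynomial.C).det = 1 := by
    rw [← det_mul, ← Matrix.map_mul (f := Polynomial.C), hUV]
    simp
  calc (U.map Polynomial.C).det * A.charmatrix.det * (V.map Polynomial.C).det
      = (U.map Polynomial.C).det * (V.map Polynomial.C).det * A.charmatrix.det := by ring
    _ = A.charmatrix.det := by rw [this, one_mul]







lemma roots_rpoly (f : Fin n → ℝ) :
    ((univ.val.map (fun i => (X:ℂ[X]) - C ((f i):ℂ))).prod).roots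
      = univ.val.map (fun i => ((f i):ℂ)) := by
  have : (univ.val.map (fun i => (X:ℂ[X]) - C ((f i):ℂ)))
      = (univ.val.map (fun i => ((f i):ℂ))).map (fun a => (X:ℂ[X]) - C a) := by
    rw [Multiset.map_map]; rfl
  rw [this, Polynomial.roots_multiset_prod_X_sub_C]

lemma charpoly_hermitian {A : Matrix (Fin n) (Fin n) ℂ} (hA : A.IsHermitian) :
    A.charpoly = (univ.val.map (fun i => (X:ℂ[X]) - C ((hA.eigenvalues i):ℂ))).prod := by
  have hU := hA.eigenvectorUnitary.2
  have h1 : (hA.eigenvectorUnitary : Matrix (Fin n) (Fin n) ℂ) *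
      star (hA.eigenvectorUnitary : Matrix (Fin n) (Fin n) ℂ) = 1 :=
    Unitary.mul_star_self_of_mem hU
  have h2 : star (hA.eigenvectorUnitary : Matrix (Fin n) (Fin n) ℂ) *
      (hA.eigenvectorUnitary : Matrix (Fin n) (Fin n) ℂ) = 1 :=
    Unitary.star_mul_self_of_mem hU
  calc A.charpoly
      = ((hA.eigenvectorUnitary : Matrix (Fin n) (Fin n) ℂ) *
          diagonal (RCLike.ofReal ∘ hA.eigenvalues) *
          star (hA.eigenvectorUnitary : Matrix (Fin n) (Fin n) ℂ)).charpoly := by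
        conv_lhs => rw [hA.spectral_theorem, Unitary.conjStarAlgAut_apply]
    _ = (diagonal (RCLike.ofReal ∘ hA.eigenvalues)).charpoly :=
        charpoly_unit_conj _ _ h1 h2 _
    _ = ∏ i, ((X:ℂ[X]) - C ((hA.eigenvalues i):ℂ)) := by
        rw [charpoly_diagonal]; rfl
    _ = _ := Finset.prod_eq_multiset_prod _ _

lemma eig_multiset_eq_of_charpoly {A B : Matrix (Fin n) (Fin n) ℂ} (hA : A.IsHermitian)
    (hB : B.IsHermitian) (h : A.charpoly = B.charpoly) :
    Multiset.map hA.eigenvalues univ.val = Multiset.map hB.eigenvalues univ.val := by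
  have h2 := congrArg Polynomial.roots
    ((charpoly_hermitian hA).symm.trans (h.trans (charpoly_hermitian hB)))
  rw [roots_rpoly, roots_rpoly] at h2
  have h3 : (Multiset.map hA.eigenvalues univ.val).map (fun r : ℝ => (r:ℂ))
      = (Multiset.map hB.eigenvalues univ.val).map (fun r : ℝ => (r:ℂ)) := by
    rw [Multiset.map_map, Multiset.map_map]; exact h2
  exact Multiset.map_injective Complex.ofReal_injective h3

lemma lam_eq_of_charpoly {A B : Matrix (Fin n) (Fin n) ℂ} (hA : A.IsHermitian)
    (hB : B.IsHermitian) (h : A.charpoly = B.charpoly) : lam hA = lam hB :=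
  lam_eq_of_multiset hA hB (eig_multiset_eq_of_charpoly hA hB h)

/-- eigenvalue multiset of a unitarily diagonalized matrix -/
lemma eig_multiset_conj_diag {U : Matrix (Fin n) (Fin n) ℂ} (hU : U ∈ unitaryGroup (Fin n) ℂ)
    (d : Fin n → ℝ) {A : Matrix (Fin n) (Fin n) ℂ} (hA : A.IsHermitian)
    (hAeq : A = U * diagonal (fun i => ((d i):ℂ)) * star U) :
    Multiset.map hA.eigenvalues univ.val = Multiset.map d univ.val := by
  have h1 : U * star U = 1 := Unitary.mul_star_self_of_mem hU
  have h2 : star U * U = 1 := Unitary.star_mul_self_of_mem hU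
  have hcp : A.charpoly = (univ.val.map (fun i => (X:ℂ[X]) - C ((d i):ℂ))).prod := by
    rw [hAeq, charpoly_unit_conj _ _ h1 h2, charpoly_diagonal]
    exact Finset.prod_eq_multiset_prod _ _
  have h4 := congrArg Polynomial.roots ((charpoly_hermitian hA).symm.trans hcp)
  rw [roots_rpoly, roots_rpoly] at h4
  have h3 : (Multiset.map hA.eigenvalues univ.val).map (fun r : ℝ => (r:ℂ))
      = (Multiset.map d univ.val).map (fun r : ℝ => (r:ℂ)) := by
    rw [Multiset.map_map, Multiset.map_map]; exact h4
  exact Multiset.map_injective Complex.ofReal_injective h3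

lemma lam_mem {A : Matrix (Fin n) (Fin n) ℂ} (hA : A.IsHermitian) (i : Fin n) :
    ∃ j, lam hA i = hA.eigenvalues j := by
  have : lam hA i ∈ Multiset.map hA.eigenvalues univ.val := by
    rw [← lam_multiset]
    exact Multiset.mem_map_of_mem _ (mem_univ i)
  obtain ⟨j, _, hj⟩ := Multiset.mem_map.1 this
  exact ⟨j, hj.symm⟩

end CP
section S3
open Matrix Finset Polynomial
namespace CP
variable {n : ℕ}

/-- the coordinate subspace supported on s -/
noncomputable def coordSpan (s : Finset (Fin n)) : Submodule ℂ (Fin n → ℂ) :=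
  Submodule.span ℂ ((fun j => Pi.single j (1:ℂ)) '' ↑s)

lemma coordSpan_apply_eq_zero {s : Finset (Fin n)} {y : Fin n → ℂ} (hy : y ∈ coordSpan s)
    {j : Fin n} (hj : j ∉ s) : y j = 0 := by
  induction hy using Submodule.span_induction with
  | mem z hz =>
    obtain ⟨i, his, rfl⟩ := hz
    exact Pi.single_eq_of_ne (fun h => hj (by rw [h]; exact his)) 1
  | zero => rfl
  | add y z _ _ hy hz => simp [hy, hz]
  | smul c y _ hy => simp [hy]

lemma finrank_coordSpan (s : Finset (Fin n)) :
    Module.finrank ℂ (coordSpan s) = s.card := by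
  have hli : LinearIndependent ℂ (fun j : {x // x ∈ s} => (Pi.single (j : Fin n) (1:ℂ) : Fin n → ℂ)) := by
    have := (Pi.basisFun ℂ (Fin n)).linearIndependent
    have h2 : LinearIndependent ℂ (fun j : {x // x ∈ s} => (Pi.basisFun ℂ (Fin n)) (j : Fin n)) :=
      this.comp _ Subtype.val_injective
    simpa [Pi.basisFun_apply] using h2
  have := finrank_span_eq_card hli
  rw [show Set.range (fun j : {x // x ∈ s} => (Pi.single (j : Fin n) (1:ℂ) : Fin n → ℂ))
      = (fun j => Pi.single j (1:ℂ)) '' ↑s by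
    rw [show (fun j : {x // x ∈ s} => (Pi.single (j : Fin n) (1:ℂ) : Fin n → ℂ))
        = (fun j => Pi.single j (1:ℂ)) ∘ Subtype.val from rfl,
      Set.range_comp, Subtype.range_val]] at this
  rw [coordSpan, this, Fintype.card_coe]

/-- subspace of x whose  coordinates w.r.t. the unitary U (i.e. (star U) *ᵥ x) are supported on s -/
noncomputable def uSpan (U : Matrix (Fin n) (Fin n) ℂ) (s : Finset (Fin n)) : Submodule ℂ (Fin n → ℂ) :=
  Submodule.comap (Matrix.mulVecLin (star U)) (coordSpan s)

lemma finrank_uSpan {U : Matrix (Fin n) (Fin n) ℂ} (hU : U ∈ unitaryGroup (Fin n) ℂ)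
    (s : Finset (Fin n)) : Module.finrank ℂ (uSpan U s) = s.card := by
  have h1 : U * star U = 1 := Unitary.mul_star_self_of_mem hU
  have h2 : star U * U = 1 := Unitary.star_mul_self_of_mem hU
  let e : (Fin n → ℂ) ≃ₗ[ℂ] (Fin n → ℂ) :=
    LinearEquiv.ofLinear (Matrix.mulVecLin (star U)) (Matrix.mulVecLin U)
      (by rw [← Matrix.mulVecLin_mul, h2, mulVecLin_one])
      (by rw [← Matrix.mulVecLin_mul, h1, mulVecLin_one])
  have : uSpan U s = Submodule.comap (e : (Fin n → ℂ) →ₗ[ℂ] (Fin n → ℂ)) (coordSpan s) := rfl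
  rw [this, Submodule.comap_equiv_eq_map_symm, LinearEquiv.finrank_map_eq, finrank_coordSpan]

lemma dotProduct_transfer {U : Matrix (Fin n) (Fin n) ℂ} (x w : Fin n → ℂ) :
    star x ⬝ᵥ (U *ᵥ w) = star (star U *ᵥ x) ⬝ᵥ w := by
  rw [star_mulVec, dotProduct_mulVec, Matrix.star_eq_conjTranspose, conjTranspose_conjTranspose]

/-- quadratic form identity for a unitarily diagonalized matrix -/
lemma quad_eq {U : Matrix (Fin n) (Fin n) ℂ} (d : Fin n → ℝ)
    {A : Matrix (Fin n) (Fin n) ℂ}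
    (hAeq : A = U * diagonal (fun i => ((d i):ℂ)) * star U) (x : Fin n → ℂ) :
    star x ⬝ᵥ (A *ᵥ x)
      = ∑ j, (((d j * Complex.normSq ((star U *ᵥ x) j) : ℝ)) : ℂ) := by
  set y := star U *ᵥ x with hy
  have : A *ᵥ x = U *ᵥ (diagonal (fun i => ((d i):ℂ)) *ᵥ y) := by
    rw [hAeq, ← mulVec_mulVec, ← mulVec_mulVec]
  rw [this, dotProduct_transfer, ← hy, dotProduct]
  congr 1; funext j
  rw [mulVec_diagonal]
  have h5 : star y j * (((d j):ℂ) * y j) = ((d j):ℂ) * (y j * star y j) := by ring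
  rw [h5, Pi.star_apply, Complex.star_def, Complex.mul_conj]
  push_cast
  ring

lemma quad_eq_one {U : Matrix (Fin n) (Fin n) ℂ} (hU : U ∈ unitaryGroup (Fin n) ℂ)
    (x : Fin n → ℂ) :
    star x ⬝ᵥ x = ∑ j, ((Complex.normSq ((star U *ᵥ x) j) : ℝ) : ℂ) := by
  have h1 : U * star U = 1 := Unitary.mul_star_self_of_mem hU
  have hone : (1 : Matrix (Fin n) (Fin n) ℂ) = U * diagonal (fun _ => ((1:ℝ):ℂ)) * star U := by
    simpa using h1.symm
  have := quad_eq (fun _ => (1:ℝ)) hone x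
  simpa using this

end CP
end S3
section S4
open Matrix Finset Polynomial
open scoped ComplexOrder
namespace CP
variable {n : ℕ}

lemma card_filter_eq_of_multiset {f g : Fin n → ℝ}
    (h : Multiset.map f univ.val = Multiset.map g univ.val) (p : ℝ → Prop) [DecidablePred p] :
    (univ.filter (fun j => p (f j))).card = (univ.filter (fun j => p (g j))).card := by
  have h2 := congrArg (Multiset.countP p) h
  rw [Multiset.countP_map, Multiset.countP_map] at h2
  simpa [Finset.card, Finset.filter] using h2

lemma count_ge {A : Matrix (Fin n) (Fin n) ℂ} (hA : A.IsHermitian) (i : Fin n) :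
    (i:ℕ) + 1 ≤ (univ.filter (fun j => lam hA i ≤ hA.eigenvalues j)).card := by
  rw [← card_filter_eq_of_multiset (lam_multiset hA) (fun r => lam hA i ≤ r)]
  have hsub : Finset.Iic i ⊆ univ.filter (fun k => lam hA i ≤ lam hA k) := by
    intro k hk
    rw [Finset.mem_Iic] at hk
    exact Finset.mem_filter.2 ⟨mem_univ _, lam_antitone hA hk⟩
  have := Finset.card_le_card hsub
  rwa [Fin.card_Iic] at this

lemma count_lt {B : Matrix (Fin n) (Fin n) ℂ} (hB : B.IsHermitian) (i : Fin n) (a' : ℝ)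
    (h : lam hB i < a') :
    n - (i:ℕ) ≤ (univ.filter (fun j => hB.eigenvalues j < a')).card := by
  rw [← card_filter_eq_of_multiset (lam_multiset hB) (fun r => r < a')]
  have hsub : univ.filter (fun k => ¬ (lam hB k < a')) ⊆ Finset.Iio i := by
    intro k hk
    rw [Finset.mem_filter, not_lt] at hk
    rw [Finset.mem_Iio]
    by_contra hki
    rw [not_lt] at hki
    exact absurd (le_trans hk.2 (lam_antitone hB hki)) (not_le.2 h)
  have h2 := Finset.card_le_card hsub
  rw [Fin.card_Iio] at h2
  have h3 := Finset.card_filter_add_card_filter_not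
    (s := univ) (p := fun k => lam hB k < a')
  rw [Finset.card_univ, Fintype.card_fin] at h3
  omega

lemma dot_self_eq (x : Fin n → ℂ) :
    star x ⬝ᵥ x = ((∑ j, Complex.normSq (x j) : ℝ) : ℂ) := by
  rw [dotProduct]
  push_cast
  congr 1; funext j
  rw [Pi.star_apply, Complex.star_def]
  rw [mul_comm, Complex.mul_conj]

/-- quadratic form identity, single ofReal form -/
lemma quad_eq' {U : Matrix (Fin n) (Fin n) ℂ} (d : Fin n → ℝ)
    {A : Matrix (Fin n) (Fin n) ℂ}
    (hAeq : A = U * diagonal (fun i => ((d i):ℂ)) * star U) (x : Fin n → ℂ) :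
    star x ⬝ᵥ (A *ᵥ x)
      = ((∑ j, d j * Complex.normSq ((star U *ᵥ x) j) : ℝ) : ℂ) := by
  rw [quad_eq d hAeq x]; push_cast; rfl

lemma quad_eq_one' {U : Matrix (Fin n) (Fin n) ℂ} (hU : U ∈ unitaryGroup (Fin n) ℂ)
    (x : Fin n → ℂ) :
    (∑ j, Complex.normSq (x j) : ℝ) = ∑ j, Complex.normSq ((star U *ᵥ x) j) := by
  have h1 := dot_self_eq x
  have h2 := quad_eq_one hU x
  rw [h1] at h2
  have h3 : ((∑ j, Complex.normSq (x j) : ℝ) : ℂ)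
      = ((∑ j, Complex.normSq ((star U *ᵥ x) j) : ℝ) : ℂ) := by
    rw [h2]; push_cast; rfl
  exact_mod_cast h3

/-- spectral theorem in the ofReal normal form -/
lemma spectral_theorem' {A : Matrix (Fin n) (Fin n) ℂ} (hA : A.IsHermitian) :
    A = (hA.eigenvectorUnitary : Matrix (Fin n) (Fin n) ℂ)
        * diagonal (fun i => ((hA.eigenvalues i : ℝ) : ℂ))
        * star (hA.eigenvectorUnitary : Matrix (Fin n) (Fin n) ℂ) := by
  have := hA.spectral_theorem
  rw [Unitary.conjStarAlgAut_apply] at this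
  exact this

/-- Weyl monotonicity: A ≤ B implies sorted eigenvalues are dominated. -/
lemma lam_le_of_posSemidef {A B : Matrix (Fin n) (Fin n) ℂ} (hA : A.IsHermitian)
    (hB : B.IsHermitian) (hBA : (B - A).PosSemidef) (i : Fin n) : lam hA i ≤ lam hB i := by
  by_contra hcon
  push_neg at hcon
  set a : ℝ := lam hA i with ha
  set a' : ℝ := (lam hB i + a) / 2 with ha'
  have ha'₁ : lam hB i < a' := by rw [ha']; linarith
  have ha'₂ : a' < a := by rw [ha']; linarith
  classical
  set s₁ := univ.filter (fun j => a ≤ hA.eigenvalues j) with hs₁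
  set s₂ := univ.filter (fun j => hB.eigenvalues j < a') with hs₂
  have hc₁ : (i:ℕ)+1 ≤ s₁.card := count_ge hA i
  have hc₂ : n - (i:ℕ) ≤ s₂.card := count_lt hB i a' ha'₁
  set UA := (hA.eigenvectorUnitary : Matrix (Fin n) (Fin n) ℂ) with hUA
  set UB := (hB.eigenvectorUnitary : Matrix (Fin n) (Fin n) ℂ) with hUB
  set V₁ := uSpan UA s₁ with hV₁
  set V₂ := uSpan UB s₂ with hV₂
  have hr₁ : Module.finrank ℂ V₁ = s₁.card := finrank_uSpan hA.eigenvectorUnitary.2 s₁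
  have hr₂ : Module.finrank ℂ V₂ = s₂.card := finrank_uSpan hB.eigenvectorUnitary.2 s₂
  have hd := Submodule.finrank_sup_add_finrank_inf_eq V₁ V₂
  have hsup : Module.finrank ℂ (V₁ ⊔ V₂ : Submodule ℂ (Fin n → ℂ)) ≤ n := by
    have := Submodule.finrank_le (V₁ ⊔ V₂ : Submodule ℂ (Fin n → ℂ))
    rwa [Module.finrank_fintype_fun_eq_card, Fintype.card_fin] at this
  have hpos : 0 < Module.finrank ℂ (V₁ ⊓ V₂ : Submodule ℂ (Fin n → ℂ)) := by
    have hin : (i:ℕ) < n := i.2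
    omega
  have hne : (V₁ ⊓ V₂ : Submodule ℂ (Fin n → ℂ)) ≠ ⊥ := by
    intro hbot
    rw [hbot] at hpos
    simp at hpos
  obtain ⟨x, hx, hx0⟩ := (Submodule.ne_bot_iff _).1 hne
  have hx₁ : x ∈ V₁ := hx.1
  have hx₂ : x ∈ V₂ := hx.2
  set y₁ := star UA *ᵥ x with hy₁
  set y₂ := star UB *ᵥ x with hy₂
  have hy₁0 : ∀ j ∉ s₁, y₁ j = 0 := fun j hj => coordSpan_apply_eq_zero hx₁ hj
  have hy₂0 : ∀ j ∉ s₂, y₂ j = 0 := fun j hj => coordSpan_apply_eq_zero hx₂ hj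
  set N : ℝ := ∑ j, Complex.normSq (x j) with hN
  have hNpos : 0 < N := by
    obtain ⟨j, hj⟩ := Function.ne_iff.1 hx0
    exact Finset.sum_pos' (fun k _ => Complex.normSq_nonneg _)
      ⟨j, mem_univ j, Complex.normSq_pos.2 hj⟩
  have hN₁ : N = ∑ j, Complex.normSq (y₁ j) := quad_eq_one' hA.eigenvectorUnitary.2 x
  have hN₂ : N = ∑ j, Complex.normSq (y₂ j) := quad_eq_one' hB.eigenvectorUnitary.2 x
  have hQA : star x ⬝ᵥ (A *ᵥ x) = ((∑ j, hA.eigenvalues j * Complex.normSq (y₁ j) : ℝ) : ℂ) :=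
    quad_eq' hA.eigenvalues (spectral_theorem' hA) x
  have hQB : star x ⬝ᵥ (B *ᵥ x) = ((∑ j, hB.eigenvalues j * Complex.normSq (y₂ j) : ℝ) : ℂ) :=
    quad_eq' hB.eigenvalues (spectral_theorem' hB) x
  have hSA : a * N ≤ ∑ j, hA.eigenvalues j * Complex.normSq (y₁ j) := by
    rw [hN₁, Finset.mul_sum]
    apply Finset.sum_le_sum
    intro j _
    by_cases hj : j ∈ s₁
    · have := (Finset.mem_filter.1 hj).2
      exact mul_le_mul_of_nonneg_right this (Complex.normSq_nonneg _)
    · rw [hy₁0 j hj]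
      simp
  have hSB : ∑ j, hB.eigenvalues j * Complex.normSq (y₂ j) ≤ a' * N := by
    rw [hN₂, Finset.mul_sum]
    apply Finset.sum_le_sum
    intro j _
    by_cases hj : j ∈ s₂
    · have := (Finset.mem_filter.1 hj).2
      exact mul_le_mul_of_nonneg_right this.le (Complex.normSq_nonneg _)
    · rw [hy₂0 j hj]
      simp
  have hmono := hBA.re_dotProduct_nonneg x
  rw [sub_mulVec, dotProduct_sub, map_sub] at hmono
  rw [hQA, hQB] at hmono
  simp only [RCLike.re_to_complex, Complex.ofReal_re] at hmono
  have : a * N ≤ a' * N := by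
    calc a * N ≤ ∑ j, hA.eigenvalues j * Complex.normSq (y₁ j) := hSA
      _ ≤ ∑ j, hB.eigenvalues j * Complex.normSq (y₂ j) := by linarith
      _ ≤ a' * N := hSB
  nlinarith
end CP
end S4
section S5
open Matrix Finset Polynomial
open scoped ComplexOrder
namespace CP
variable {n : ℕ}

/-- spectral synthesis -/
noncomputable def synth (U : Matrix (Fin n) (Fin n) ℂ) (d : Fin n → ℝ) :
    Matrix (Fin n) (Fin n) ℂ :=
  U * diagonal (fun j => ((d j):ℂ)) * star U

variable {U : Matrix (Fin n) (Fin n) ℂ}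

lemma synth_mul (hU : U ∈ unitaryGroup (Fin n) ℂ) (d e : Fin n → ℝ) :
    synth U d * synth U e = synth U (fun j => d j * e j) := by
  have h2 : star U * U = 1 := Unitary.star_mul_self_of_mem hU
  unfold synth
  simp only [Matrix.mul_assoc]
  rw [show star U * (U * (diagonal (fun j => ((e j):ℂ)) * star U))
      = diagonal (fun j => ((e j):ℂ)) * star U by
    rw [← Matrix.mul_assoc, h2, Matrix.one_mul]]
  rw [← Matrix.mul_assoc (diagonal _), diagonal_mul_diagonal]
  congr 2
  funext j
  push_cast
  ring

lemma synth_herm (d : Fin n → ℝ) : (synth U d).IsHermitian := by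
  have hd : (diagonal (fun j => ((d j):ℂ))).IsHermitian := by
    rw [Matrix.IsHermitian, diagonal_conjTranspose]
    have hst : (star fun j => ((d j):ℂ)) = fun j => ((d j):ℂ) := by
      funext j
      simp [Pi.star_apply, Complex.star_def, Complex.conj_ofReal]
    rw [hst]
  show (U * diagonal (fun j => ((d j):ℂ)) * star U)ᴴ = _
  rw [Matrix.star_eq_conjTranspose, conjTranspose_mul, conjTranspose_mul,
    conjTranspose_conjTranspose, hd]
  unfold synth
  rw [Matrix.star_eq_conjTranspose, Matrix.mul_assoc]

lemma synth_one (hU : U ∈ unitaryGroup (Fin n) ℂ) : synth U (fun _ => (1:ℝ)) = 1 := by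
  have h1 : U * star U = 1 := Unitary.mul_star_self_of_mem hU
  unfold synth
  simpa using h1

lemma synth_sub (hU : U ∈ unitaryGroup (Fin n) ℂ) (d e : Fin n → ℝ) : synth U d - synth U e = synth U (fun j => d j - e j) := by
  unfold synth
  rw [← Matrix.sub_mul, ← Matrix.mul_sub, diagonal_sub]
  congr 2
  funext j
  push_cast
  ring

lemma synth_posSemidef (hU : U ∈ unitaryGroup (Fin n) ℂ) {d : Fin n → ℝ} (hd : ∀ j, 0 ≤ d j) : (synth U d).PosSemidef := by
  have : (diagonal (fun j => ((d j):ℂ))).PosSemidef := by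
    rw [posSemidef_diagonal_iff]
    intro j
    exact_mod_cast Complex.zero_le_real.2 (hd j)
  have h := this.mul_mul_conjTranspose_same U
  unfold synth
  rw [Matrix.star_eq_conjTranspose]
  exact h

lemma synth_det (hU : U ∈ unitaryGroup (Fin n) ℂ) (d : Fin n → ℝ) : (synth U d).det = ∏ j, ((d j):ℂ) := by
  unfold synth
  rw [det_mul, det_mul, mul_comm, ← mul_assoc, ← det_mul,
    Unitary.star_mul_self_of_mem hU, det_one, one_mul, det_diagonal]

lemma synth_isUnit (hU : U ∈ unitaryGroup (Fin n) ℂ) {d : Fin n → ℝ} (hd : ∀ j, d j ≠ 0) : IsUnit (synth U d).det := by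
  rw [synth_det hU]
  exact isUnit_iff_ne_zero.2 (Finset.prod_ne_zero_iff.2 (fun j _ => Complex.ofReal_ne_zero.2 (hd j)))

lemma lam_synth (hU : U ∈ unitaryGroup (Fin n) ℂ) {d : Fin n → ℝ} :
    Multiset.map (synth_herm (U := U) d).eigenvalues univ.val = Multiset.map d univ.val :=
  eig_multiset_conj_diag hU d _ rfl

/-- similar Hermitian matrices have the same sorted eigenvalues -/
lemma lam_eq_of_conj {A B P Q : Matrix (Fin n) (Fin n) ℂ} (hA : A.IsHermitian)
    (hB : B.IsHermitian) (hPQ : P * Q = 1) (hQP : Q * P = 1) (h : B = P * A * Q) :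
    lam hA = lam hB := by
  apply lam_eq_of_charpoly
  rw [h, charpoly_unit_conj P Q hPQ hQP]

/-- eigenvalues of XᴴX and XXᴴ agree for invertible X -/
lemma lam_mul_comm {X : Matrix (Fin n) (Fin n) ℂ} (hX : IsUnit X.det) :
    lam (isHermitian_conjTranspose_mul_self X) = lam (isHermitian_mul_conjTranspose_self X) := by
  apply lam_eq_of_conj (P := X) (Q := X⁻¹) _ _ (mul_nonsing_inv X hX) (nonsing_inv_mul X hX)
  have h5 : X * (Xᴴ * X) * X⁻¹ = X * Xᴴ * (X * X⁻¹) := by simp only [Matrix.mul_assoc]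
  rw [h5, mul_nonsing_inv X hX, Matrix.mul_one]

/-- lam of a nonneg scalar multiple -/
lemma lam_smul {A : Matrix (Fin n) (Fin n) ℂ} (hA : A.IsHermitian) (r : ℝ) (hr : 0 ≤ r)
    (hrA : (((r:ℂ)) • A).IsHermitian) : lam hrA = fun i => r * lam hA i := by
  apply antitone_eq_of_multiset (lam_antitone _)
  · intro i j hij
    exact mul_le_mul_of_nonneg_left (lam_antitone hA hij) hr
  · have h1 : (((r:ℂ)) • A) = (hA.eigenvectorUnitary : Matrix (Fin n) (Fin n) ℂ)
        * diagonal (fun i => (((r * hA.eigenvalues i : ℝ)):ℂ))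
        * star (hA.eigenvectorUnitary : Matrix (Fin n) (Fin n) ℂ) := by
      nth_rewrite 1 [spectral_theorem' hA]
      rw [← Matrix.smul_mul, ← Matrix.mul_smul]
      congr 2
      rw [← diagonal_smul]
      have heq : ((↑r:ℂ) • fun i => ((hA.eigenvalues i:ℝ):ℂ))
          = fun i => (((r * hA.eigenvalues i :ℝ)):ℂ) := by
        funext j
        simp only [Pi.smul_apply, smul_eq_mul]
        push_cast
        ring
      rw [heq]
    have h2 := eig_multiset_conj_diag hA.eigenvectorUnitary.2 _ hrA h1
    rw [lam_multiset, h2]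
    have h3 := lam_multiset hA
    calc Multiset.map (fun j => r * hA.eigenvalues j) univ.val
        = Multiset.map (fun t => r * t) (Multiset.map hA.eigenvalues univ.val) := by
          rw [Multiset.map_map]; rfl
      _ = Multiset.map (fun t => r * t) (Multiset.map (lam hA) univ.val) := by rw [h3]
      _ = Multiset.map (fun i => r * lam hA i) univ.val := by rw [Multiset.map_map]; rfl

/-- MᴴM is positive definite for invertible M -/
lemma posDef_ctm {M : Matrix (Fin n) (Fin n) ℂ} (hM : IsUnit M.det) :
    (Mᴴ * M).PosDef := by
  refine Matrix.PosDef.of_dotProduct_mulVec_pos (isHermitian_conjTranspose_mul_self M) (fun x hx => ?_)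
  have h1 : star x ⬝ᵥ ((Mᴴ * M) *ᵥ x) = star (M *ᵥ x) ⬝ᵥ (M *ᵥ x) := by
    rw [← mulVec_mulVec, dotProduct_mulVec, star_mulVec]
  have h2 : M *ᵥ x ≠ 0 := by
    intro h0
    exact hx (by
      have := Matrix.eq_zero_of_mulVec_eq_zero hM.ne_zero h0
      exact this)
  rw [h1, dot_self_eq]
  obtain ⟨j, hj⟩ := Function.ne_iff.1 h2
  have : 0 < ∑ j, Complex.normSq ((M *ᵥ x) j) :=
    Finset.sum_pos' (fun k _ => Complex.normSq_nonneg _) ⟨j, mem_univ j, Complex.normSq_pos.2 hj⟩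
  exact Complex.zero_lt_real.2 this

lemma lam_pos_of_posDef {A : Matrix (Fin n) (Fin n) ℂ} (hA : A.PosDef) (i : Fin n) :
    0 < lam hA.1 i := by
  obtain ⟨j, hj⟩ := lam_mem hA.1 i
  rw [hj]
  exact hA.eigenvalues_pos j

lemma lam_nonneg_of_posSemidef {A : Matrix (Fin n) (Fin n) ℂ} (hA : A.PosSemidef) (i : Fin n) :
    0 ≤ lam hA.1 i := by
  obtain ⟨j, hj⟩ := lam_mem hA.1 i
  rw [hj]
  exact hA.eigenvalues_nonneg j

lemma prod_cast_eq_of_multiset {f g : Fin n → ℝ}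
    (h : Multiset.map f univ.val = Multiset.map g univ.val) :
    ∏ i, ((f i):ℂ) = ∏ i, ((g i):ℂ) := by
  rw [Finset.prod_eq_multiset_prod, Finset.prod_eq_multiset_prod]
  have h1 : Multiset.map (fun i => ((f i):ℂ)) univ.val
      = Multiset.map (fun r : ℝ => (r:ℂ)) (Multiset.map f univ.val) := by
    rw [Multiset.map_map]; rfl
  have h2 : Multiset.map (fun i => ((g i):ℂ)) univ.val
      = Multiset.map (fun r : ℝ => (r:ℂ)) (Multiset.map g univ.val) := by
    rw [Multiset.map_map]; rfl
  rw [h1, h2, h]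

/-- product of sorted eigenvalues = det -/
lemma prod_lam {A : Matrix (Fin n) (Fin n) ℂ} (hA : A.IsHermitian) :
    A.det = ((∏ i, lam hA i : ℝ) : ℂ) := by
  rw [hA.det_eq_prod_eigenvalues]
  have h0 : ∀ r : ℝ, ((r:ℝ) : ℂ) = (RCLike.ofReal r : ℂ) := fun r => rfl
  have h1 : ∏ i, (RCLike.ofReal (hA.eigenvalues i) : ℂ) = ∏ i, ((lam hA i : ℝ):ℂ) := by
    rw [show (fun i => (RCLike.ofReal (hA.eigenvalues i) : ℂ))
        = (fun i => ((hA.eigenvalues i : ℝ):ℂ)) from rfl]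
    exact prod_cast_eq_of_multiset (lam_multiset hA).symm
  rw [h1]
  push_cast
  rfl

end CP
end S5
section S6
open Matrix Finset Polynomial
open scoped ComplexOrder
open scoped MatrixOrder
namespace CP
variable {n : ℕ}

lemma lam_congr {A B : Matrix (Fin n) (Fin n) ℂ} (hA : A.IsHermitian) (hB : B.IsHermitian)
    (h : A = B) : lam hA = lam hB := by subst h; rfl

lemma synth_const {U : Matrix (Fin n) (Fin n) ℂ} (hU : U ∈ unitaryGroup (Fin n) ℂ) (c : ℝ) :
    synth U (fun _ => c) = ((c:ℝ):ℂ) • (1 : Matrix (Fin n) (Fin n) ℂ) := by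
  have hdiag : (diagonal (fun _ : Fin n => ((c:ℝ):ℂ)))
      = ((c:ℝ):ℂ) • (1 : Matrix (Fin n) (Fin n) ℂ) := by
    ext i j
    by_cases h : i = j
    · subst h; simp
    · simp [diagonal_apply_ne _ h, Matrix.one_apply_ne h]
  unfold synth
  rw [hdiag, Matrix.mul_smul, Matrix.smul_mul, Matrix.mul_one, Unitary.mul_star_self_of_mem hU]

lemma smul_herm {C : Matrix (Fin n) (Fin n) ℂ} (hC : C.IsHermitian) (r : ℝ) :
    (((r:ℝ):ℂ) • C).IsHermitian := by
  rw [Matrix.IsHermitian, conjTranspose_smul, hC]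
  congr 1
  simp [Complex.star_def, Complex.conj_ofReal]

/-- key conjugation upper bound: λᵢ((N·synth U d)ᴴ(N·synth U d)) ≤ s² λᵢ(NᴴN) when 0 < d ≤ s -/
lemma lam_conj_upper {N : Matrix (Fin n) (Fin n) ℂ} (hN : IsUnit N.det)
    {U : Matrix (Fin n) (Fin n) ℂ} (hU : U ∈ unitaryGroup (Fin n) ℂ)
    {d : Fin n → ℝ} (hd0 : ∀ j, 0 < d j) {s : ℝ} (hds : ∀ j, d j ≤ s) (i : Fin n) :
    lam (isHermitian_conjTranspose_mul_self (N * synth U d)) i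
      ≤ s^2 * lam (isHermitian_conjTranspose_mul_self N) i := by
  set P := synth U d with hPdef
  have hPherm : P.IsHermitian := synth_herm d
  set C := Nᴴ * N with hCdef
  have hC : C.PosDef := posDef_ctm hN
  set R := CFC.sqrt C with hRdef
  have hRpsd : R.PosSemidef := Matrix.nonneg_iff_posSemidef.1 (CFC.sqrt_nonneg C)
  have hRherm : R.IsHermitian := hRpsd.1
  have hRR : R * R = C := CFC.sqrt_mul_sqrt_self C hC.posSemidef.nonneg
  have hdetR : IsUnit R.det := by
    have h1 : R.det * R.det = C.det := by rw [← det_mul, hRR]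
    have h2 : C.det ≠ 0 := hC.det_pos.ne'
    exact isUnit_iff_ne_zero.2 (fun h0 => h2 (by rw [← h1, h0, mul_zero]))
  have hdetP : IsUnit P.det := synth_isUnit hU (fun j => (hd0 j).ne')
  set X := R * P with hXdef
  have hdetX : IsUnit X.det := by rw [hXdef, det_mul]; exact hdetR.mul hdetP
  have hPP : P * P = synth U (fun j => d j * d j) := synth_mul hU d d
  clear_value X R C P
  -- (NP)ᴴ(NP) = P C P = XᴴX
  have h1 : (N * P)ᴴ * (N * P) = Xᴴ * X := by
    rw [conjTranspose_mul, hXdef, conjTranspose_mul, hPherm, hRherm]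
    calc P * Nᴴ * (N * P) = P * (Nᴴ * N) * P := by simp only [Matrix.mul_assoc]
      _ = P * (R * R) * P := by rw [← hCdef, ← hRR]
      _ = (P * R) * (R * P) := by simp only [Matrix.mul_assoc]
  have h2 : X * Xᴴ = R * (P * P) * R := by
    rw [hXdef, conjTranspose_mul, hPherm, hRherm]
    simp only [Matrix.mul_assoc]
  have hlam1 : lam (isHermitian_conjTranspose_mul_self (N * P))
      = lam (isHermitian_mul_conjTranspose_self X) := by
    rw [lam_congr (isHermitian_conjTranspose_mul_self (N * P))
      (isHermitian_conjTranspose_mul_self X) h1]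
    exact lam_mul_comm hdetX
  -- R (P*P) R ≤ s² • C (upper)
  have hdiffpsd : (((s^2:ℝ):ℂ) • C - R * (P * P) * R).PosSemidef := by
    have hs1 : ((s^2:ℝ):ℂ) • C = R * (((s^2:ℝ):ℂ) • (1 : Matrix (Fin n) (Fin n) ℂ)) * R := by
      rw [Matrix.mul_smul, Matrix.smul_mul, Matrix.mul_one, hRR]
    have hsynthpsd : (synth U (fun j => s^2 - d j * d j)).PosSemidef := by
      apply synth_posSemidef hU
      intro j
      have := hd0 j
      have := hds j
      nlinarith
    have hsub : ((s^2:ℝ):ℂ) • (1 : Matrix (Fin n) (Fin n) ℂ) - P * P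
        = synth U (fun j => s^2 - d j * d j) := by
      rw [hPP, ← synth_const hU (s^2), synth_sub hU]
    have h3 : ((s^2:ℝ):ℂ) • C - R * (P * P) * R
        = R * (synth U (fun j => s^2 - d j * d j)) * R := by
      rw [hs1, ← hsub]
      rw [Matrix.mul_sub, Matrix.sub_mul]
    rw [h3]
    have := hsynthpsd.mul_mul_conjTranspose_same R
    rwa [hRherm] at this
  have hRPPR : (R * (P * P) * R).IsHermitian := by
    rw [← h2]; exact isHermitian_mul_conjTranspose_self X
  have hmono := lam_le_of_posSemidef hRPPR (smul_herm hC.1 (s^2)) hdiffpsd i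
  have hsm := lam_smul hC.1 (s^2) (sq_nonneg s) (smul_herm hC.1 (s^2))
  calc lam (isHermitian_conjTranspose_mul_self (N * P)) i
      = lam hRPPR i := by
        rw [hlam1]
        exact congrFun (lam_congr _ _ h2) i
    _ ≤ lam (smul_herm hC.1 (s^2)) i := hmono
    _ = s^2 * lam hC.1 i := by rw [hsm]
    _ = s^2 * lam (isHermitian_conjTranspose_mul_self N) i := by
        rw [congrFun (lam_congr hC.1 (isHermitian_conjTranspose_mul_self N) hCdef) i]

/-- key conjugation lower bound: λᵢ(NᴴN) ≤ λᵢ((N·synth U d)ᴴ(N·synth U d)) when d ≥ 1 -/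
lemma lam_conj_lower {N : Matrix (Fin n) (Fin n) ℂ} (hN : IsUnit N.det)
    {U : Matrix (Fin n) (Fin n) ℂ} (hU : U ∈ unitaryGroup (Fin n) ℂ)
    {d : Fin n → ℝ} (hd1 : ∀ j, 1 ≤ d j) (i : Fin n) :
    lam (isHermitian_conjTranspose_mul_self N) i
      ≤ lam (isHermitian_conjTranspose_mul_self (N * synth U d)) i := by
  set P := synth U d with hPdef
  have hPherm : P.IsHermitian := synth_herm d
  set C := Nᴴ * N with hCdef
  have hC : C.PosDef := posDef_ctm hN
  set R := CFC.sqrt C with hRdef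
  have hRpsd : R.PosSemidef := Matrix.nonneg_iff_posSemidef.1 (CFC.sqrt_nonneg C)
  have hRherm : R.IsHermitian := hRpsd.1
  have hRR : R * R = C := CFC.sqrt_mul_sqrt_self C hC.posSemidef.nonneg
  have hdetR : IsUnit R.det := by
    have h1 : R.det * R.det = C.det := by rw [← det_mul, hRR]
    have h2 : C.det ≠ 0 := hC.det_pos.ne'
    exact isUnit_iff_ne_zero.2 (fun h0 => h2 (by rw [← h1, h0, mul_zero]))
  have hdetP : IsUnit P.det := synth_isUnit hU (fun j => (lt_of_lt_of_le one_pos (hd1 j)).ne')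
  set X := R * P with hXdef
  have hdetX : IsUnit X.det := by rw [hXdef, det_mul]; exact hdetR.mul hdetP
  have hPP : P * P = synth U (fun j => d j * d j) := synth_mul hU d d
  clear_value X R C P
  have h1 : (N * P)ᴴ * (N * P) = Xᴴ * X := by
    rw [conjTranspose_mul, hXdef, conjTranspose_mul, hPherm, hRherm]
    calc P * Nᴴ * (N * P) = P * (Nᴴ * N) * P := by simp only [Matrix.mul_assoc]
      _ = P * (R * R) * P := by rw [← hCdef, ← hRR]
      _ = (P * R) * (R * P) := by simp only [Matrix.mul_assoc]
  have h2 : X * Xᴴ = R * (P * P) * R := by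
    rw [hXdef, conjTranspose_mul, hPherm, hRherm]
    simp only [Matrix.mul_assoc]
  have hlam1 : lam (isHermitian_conjTranspose_mul_self (N * P))
      = lam (isHermitian_mul_conjTranspose_self X) := by
    rw [lam_congr (isHermitian_conjTranspose_mul_self (N * P))
      (isHermitian_conjTranspose_mul_self X) h1]
    exact lam_mul_comm hdetX
  have hdiffpsd : (R * (P * P) * R - C).PosSemidef := by
    have hsynthpsd : (synth U (fun j => d j * d j - 1)).PosSemidef := by
      apply synth_posSemidef hU
      intro j
      have := hd1 j
      nlinarith
    have hsub : P * P - 1 = synth U (fun j => d j * d j - 1) := by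
      rw [hPP, ← synth_one hU, synth_sub hU]
    have h3 : R * (P * P) * R - C
        = R * (synth U (fun j => d j * d j - 1)) * R := by
      rw [← hsub, Matrix.mul_sub, Matrix.sub_mul, Matrix.mul_one, hRR]
    rw [h3]
    have := hsynthpsd.mul_mul_conjTranspose_same R
    rwa [hRherm] at this
  have hRPPR : (R * (P * P) * R).IsHermitian := by
    rw [← h2]; exact isHermitian_mul_conjTranspose_self X
  have hmono := lam_le_of_posSemidef hC.1 hRPPR hdiffpsd i
  calc lam (isHermitian_conjTranspose_mul_self N) i
      = lam hC.1 i := congrFun (lam_congr (isHermitian_conjTranspose_mul_self N) hC.1 hCdef.symm) i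
    _ ≤ lam hRPPR i := hmono
    _ = lam (isHermitian_conjTranspose_mul_self (N * P)) i := by
        rw [hlam1]
        exact (congrFun (lam_congr _ _ h2) i).symm

/-- right multiplication by a unitary preserves singular values -/
lemma lam_mul_unitary (N : Matrix (Fin n) (Fin n) ℂ) {W : Matrix (Fin n) (Fin n) ℂ}
    (hW : W ∈ unitaryGroup (Fin n) ℂ) :
    lam (isHermitian_conjTranspose_mul_self (N * W)) = lam (isHermitian_conjTranspose_mul_self N) := by
  symm
  apply lam_eq_of_conj (P := star W) (Q := W) _ _ (Unitary.star_mul_self_of_mem hW)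
    (Unitary.mul_star_self_of_mem hW)
  rw [conjTranspose_mul]
  rw [Matrix.star_eq_conjTranspose]
  simp only [Matrix.mul_assoc]

lemma charpoly_transpose (A : Matrix (Fin n) (Fin n) ℂ) : (Aᵀ).charpoly = A.charpoly := by
  have h : (Aᵀ).charmatrix = (A.charmatrix)ᵀ := by
    ext i j
    simp only [charmatrix_apply, transpose_apply]
    by_cases hij : i = j
    · subst hij; rfl
    · rw [diagonal_apply_ne _ hij, diagonal_apply_ne _ (fun h => hij h.symm)]
  rw [Matrix.charpoly, Matrix.charpoly, h, det_transpose]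

/-- singular values of the transpose -/
lemma lam_transpose {M : Matrix (Fin n) (Fin n) ℂ} (hM : IsUnit M.det) :
    lam (isHermitian_conjTranspose_mul_self (Mᵀ)) = lam (isHermitian_conjTranspose_mul_self M) := by
  have h1 : (Mᵀ)ᴴ * Mᵀ = (M * Mᴴ)ᵀ := by
    ext i j
    simp [conjTranspose_apply, transpose_apply, mul_apply, mul_comm]
  calc lam (isHermitian_conjTranspose_mul_self (Mᵀ))
      = lam (isHermitian_mul_conjTranspose_self M).transpose := by
        apply lam_congr _ _ h1
    _ = lam (isHermitian_mul_conjTranspose_self M) := by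
        apply lam_eq_of_charpoly
        exact charpoly_transpose _
    _ = lam (isHermitian_conjTranspose_mul_self M) := (lam_mul_comm hM).symm

end CP
end S6
section S7
open Matrix Finset Polynomial
open scoped ComplexOrder
namespace CP
variable {n : ℕ}

/-- singular values, descending -/
noncomputable def sv (M : Matrix (Fin n) (Fin n) ℂ) : Fin n → ℝ :=
  fun i => Real.sqrt (lam (isHermitian_conjTranspose_mul_self M) i)

lemma sv_antitone (M : Matrix (Fin n) (Fin n) ℂ) : Antitone (sv M) :=
  fun i j hij => Real.sqrt_le_sqrt (lam_antitone _ hij)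

lemma sv_pos {M : Matrix (Fin n) (Fin n) ℂ} (hM : IsUnit M.det) (i : Fin n) : 0 < sv M i :=
  Real.sqrt_pos.2 (lam_pos_of_posDef (posDef_ctm hM) i)

lemma sum_comp_eq_of_multiset {f g : Fin n → ℝ}
    (h : Multiset.map f univ.val = Multiset.map g univ.val) (F : ℝ → ℝ) :
    ∑ i, F (f i) = ∑ i, F (g i) := by
  rw [Finset.sum_eq_multiset_sum, Finset.sum_eq_multiset_sum]
  have h1 : Multiset.map (fun i => F (f i)) univ.val
      = Multiset.map F (Multiset.map f univ.val) := by rw [Multiset.map_map]; rfl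
  have h2 : Multiset.map (fun i => F (g i)) univ.val
      = Multiset.map F (Multiset.map g univ.val) := by rw [Multiset.map_map]; rfl
  rw [h1, h2, h]

/-- product of singular values is |det| -/
lemma prod_sv {M : Matrix (Fin n) (Fin n) ℂ} (hM : IsUnit M.det) :
    ∏ i, sv M i = ‖M.det‖ := by
  have hherm := isHermitian_conjTranspose_mul_self M
  have hnn : ∀ i, 0 ≤ lam hherm i :=
    lam_nonneg_of_posSemidef (posSemidef_conjTranspose_mul_self M)
  have h1 : (∏ i, sv M i)^2 = ∏ i, lam hherm i := by
    rw [← Finset.prod_pow]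
    exact Finset.prod_congr rfl (fun i _ => Real.sq_sqrt (hnn i))
  have h2 : (Mᴴ * M).det = ((Complex.normSq M.det : ℝ) : ℂ) := by
    rw [det_mul, det_conjTranspose, Complex.star_def]
    rw [← Complex.normSq_eq_conj_mul_self]
  have h3 : ((∏ i, lam hherm i : ℝ) : ℂ) = ((Complex.normSq M.det : ℝ) : ℂ) := by
    rw [← prod_lam hherm, h2]
  have h4 : ∏ i, lam hherm i = Complex.normSq M.det := by exact_mod_cast h3
  have h5 : (∏ i, sv M i)^2 = (‖M.det‖)^2 := by
    rw [h1, h4, Complex.normSq_eq_norm_sq]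
  have h6 : 0 ≤ ∏ i, sv M i := Finset.prod_nonneg (fun i _ => Real.sqrt_nonneg _)
  nlinarith [norm_nonneg M.det]

lemma sv_mul_unitary (N : Matrix (Fin n) (Fin n) ℂ) {W : Matrix (Fin n) (Fin n) ℂ}
    (hW : W ∈ unitaryGroup (Fin n) ℂ) : sv (N * W) = sv N := by
  unfold sv
  rw [lam_mul_unitary N hW]

lemma sv_transpose {M : Matrix (Fin n) (Fin n) ℂ} (hM : IsUnit M.det) : sv (Mᵀ) = sv M := by
  unfold sv
  rw [lam_transpose hM]

/-- The multiplicative Lidskii inequality, subset version. -/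
lemma lidskii_subset {A B : Matrix (Fin n) (Fin n) ℂ} (hA : IsUnit A.det) (hB : IsUnit B.det)
    (k : Fin n) (S : Finset (Fin n)) (hcard : S.card = (k:ℕ) + 1) :
    ∑ i ∈ S, (Real.log (sv (A * B) i) - Real.log (sv A i))
      ≤ ∑ j ∈ Finset.Iic k, Real.log (sv B j) := by
  classical
  -- spectral data of BᴴB
  have hH : (Bᴴ * B).PosDef := posDef_ctm hB
  set U : Matrix (Fin n) (Fin n) ℂ := (hH.1.eigenvectorUnitary : Matrix (Fin n) (Fin n) ℂ)
    with hUdef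
  have hU : U ∈ unitaryGroup (Fin n) ℂ := hH.1.eigenvectorUnitary.2
  set ev : Fin n → ℝ := hH.1.eigenvalues with hevdef
  have hev : ∀ j, 0 < ev j := hH.eigenvalues_pos
  set sval : Fin n → ℝ := fun j => Real.sqrt (ev j) with hsvaldef
  have hsval : ∀ j, 0 < sval j := fun j => Real.sqrt_pos.2 (hev j)
  set s : ℝ := sv B k with hsdef
  have hs : 0 < s := sv_pos hB k
  -- P := sqrt of BᴴB via synth, P * P = BᴴB
  set P : Matrix (Fin n) (Fin n) ℂ := synth U sval with hPdef
  have hPherm : P.IsHermitian := synth_herm sval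
  have hPP : P * P = Bᴴ * B := by
    rw [hPdef, synth_mul hU]
    have h1 : (fun j => sval j * sval j) = ev := by
      funext j
      rw [hsvaldef]
      exact Real.mul_self_sqrt (hev j).le
    rw [h1]
    exact (spectral_theorem' hH.1).symm
  have hdetP : IsUnit P.det := synth_isUnit hU (fun j => (hsval j).ne')
  -- polar decomposition B = W * P
  set W : Matrix (Fin n) (Fin n) ℂ := B * P⁻¹ with hWdef
  have hWP : W * P = B := nonsing_inv_mul_cancel_right P B hdetP
  have hWU : W ∈ unitaryGroup (Fin n) ℂ := by
    rw [mem_unitaryGroup_iff']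
    rw [hWdef, Matrix.star_eq_conjTranspose, conjTranspose_mul, conjTranspose_nonsing_inv,
      hPherm]
    calc P⁻¹ * Bᴴ * (B * P⁻¹) = P⁻¹ * (Bᴴ * B) * P⁻¹ := by simp only [Matrix.mul_assoc]
      _ = P⁻¹ * (P * P) * P⁻¹ := by rw [hPP]
      _ = (P⁻¹ * P) * (P * P⁻¹) := by simp only [Matrix.mul_assoc]
      _ = 1 := by rw [nonsing_inv_mul P hdetP, mul_nonsing_inv P hdetP, Matrix.one_mul]
  -- split P = P' * P''
  set d' : Fin n → ℝ := fun j => max (sval j) s / s with hd'def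
  set d'' : Fin n → ℝ := fun j => min (sval j) s with hd''def
  have hd'1 : ∀ j, 1 ≤ d' j := fun j => (one_le_div hs).2 (le_max_right _ _)
  have hd''0 : ∀ j, 0 < d'' j := fun j => lt_min (hsval j) hs
  have hd''s : ∀ j, d'' j ≤ s := fun j => min_le_right _ _
  have hsplit : synth U d' * synth U d'' = P := by
    rw [synth_mul hU, hPdef]
    have hfun : (fun j => d' j * d'' j) = sval := by
      funext j
      show max (sval j) s / s * min (sval j) s = sval j
      rcases le_total (sval j) s with h | h
      · rw [max_eq_right h, min_eq_left h, div_self hs.ne', one_mul]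
      · rw [max_eq_left h, min_eq_right h, div_mul_cancel₀ _ hs.ne']
    rw [hfun]
  -- N := A * W
  set N : Matrix (Fin n) (Fin n) ℂ := A * W with hNdef
  have hdetW : IsUnit W.det := by
    have h1 : W * star W = 1 := Unitary.mul_star_self_of_mem hWU
    have h2 := congrArg Matrix.det h1
    rw [det_mul, det_one] at h2
    exact IsUnit.of_mul_eq_one _ h2
  have hdetN : IsUnit N.det := by rw [hNdef, det_mul]; exact hA.mul hdetW
  have hdetP' : IsUnit (synth U d').det :=
    synth_isUnit hU (fun j => (lt_of_lt_of_le one_pos (hd'1 j)).ne')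
  have hdetNP' : IsUnit (N * synth U d').det := by rw [det_mul]; exact hdetN.mul hdetP'
  have hfact : A * B = (N * synth U d') * synth U d'' := by
    rw [hNdef, ← hWP]
    simp only [Matrix.mul_assoc]
    rw [← hsplit]
  -- pointwise singular value bounds
  have hsvN : sv N = sv A := by rw [hNdef]; exact sv_mul_unitary A hWU
  have key1 : ∀ i, sv (A * B) i ≤ s * sv (N * synth U d') i := by
    intro i
    have h1 : lam (isHermitian_conjTranspose_mul_self (A * B)) i
        = lam (isHermitian_conjTranspose_mul_self ((N * synth U d') * synth U d'')) i :=
      congrFun (lam_congr _ _ (by rw [hfact])) i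
    have h2 := lam_conj_upper hdetNP' hU hd''0 hd''s i
    have h3 : lam (isHermitian_conjTranspose_mul_self (A * B)) i
        ≤ s^2 * lam (isHermitian_conjTranspose_mul_self (N * synth U d')) i := by
      rw [h1]; exact h2
    unfold sv
    calc Real.sqrt (lam (isHermitian_conjTranspose_mul_self (A * B)) i)
        ≤ Real.sqrt (s^2 * lam (isHermitian_conjTranspose_mul_self (N * synth U d')) i) :=
          Real.sqrt_le_sqrt h3
      _ = s * Real.sqrt (lam (isHermitian_conjTranspose_mul_self (N * synth U d')) i) := by
          rw [Real.sqrt_mul (sq_nonneg s), Real.sqrt_sq hs.le]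
  have key2 : ∀ i, sv N i ≤ sv (N * synth U d') i :=
    fun i => Real.sqrt_le_sqrt (lam_conj_lower hdetN hU hd'1 i)
  -- positivity of everything
  have hposAB : ∀ i, 0 < sv (A * B) i := sv_pos (by rw [det_mul]; exact hA.mul hB)
  have hposA : ∀ i, 0 < sv A i := sv_pos hA
  have hposN : ∀ i, 0 < sv N i := sv_pos hdetN
  have hposNP' : ∀ i, 0 < sv (N * synth U d') i := sv_pos hdetNP'
  have hposB : ∀ i, 0 < sv B i := sv_pos hB
  -- step 1 : per-term log bound on S
  have step1 : ∑ i ∈ S, (Real.log (sv (A * B) i) - Real.log (sv A i))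
      ≤ ((k:ℕ) + 1 : ℝ) * Real.log s
        + ∑ i ∈ univ, (Real.log (sv (N * synth U d') i) - Real.log (sv N i)) := by
    have hterm : ∀ i, Real.log (sv (A * B) i) - Real.log (sv A i)
        ≤ Real.log s + (Real.log (sv (N * synth U d') i) - Real.log (sv N i)) := by
      intro i
      have h1 : Real.log (sv (A * B) i) ≤ Real.log s + Real.log (sv (N * synth U d') i) := by
        calc Real.log (sv (A * B) i) ≤ Real.log (s * sv (N * synth U d') i) :=
              Real.log_le_log (hposAB i) (key1 i)
          _ = Real.log s + Real.log (sv (N * synth U d') i) :=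
              Real.log_mul hs.ne' (hposNP' i).ne'
      have h2 : sv A i = sv N i := by rw [hsvN]
      rw [h2]
      linarith
    calc ∑ i ∈ S, (Real.log (sv (A * B) i) - Real.log (sv A i))
        ≤ ∑ i ∈ S, (Real.log s + (Real.log (sv (N * synth U d') i) - Real.log (sv N i))) :=
          Finset.sum_le_sum (fun i _ => hterm i)
      _ = S.card * Real.log s
          + ∑ i ∈ S, (Real.log (sv (N * synth U d') i) - Real.log (sv N i)) := by
          rw [Finset.sum_add_distrib, Finset.sum_const, nsmul_eq_mul]
      _ ≤ ((k:ℕ) + 1 : ℝ) * Real.log s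
          + ∑ i ∈ univ, (Real.log (sv (N * synth U d') i) - Real.log (sv N i)) := by
          rw [hcard]
          push_cast
          have hsub : ∑ i ∈ S, (Real.log (sv (N * synth U d') i) - Real.log (sv N i))
              ≤ ∑ i ∈ univ, (Real.log (sv (N * synth U d') i) - Real.log (sv N i)) :=
            Finset.sum_le_sum_of_subset_of_nonneg (Finset.subset_univ S)
              (fun i _ _ => by
                have h := Real.log_le_log (hposN i) (key2 i)
                linarith)
          linarith
  -- step 2 : full sum equals log det P'
  have step2 : ∑ i ∈ univ, (Real.log (sv (N * synth U d') i) - Real.log (sv N i))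
      = ∑ j ∈ univ, Real.log (d' j) := by
    rw [Finset.sum_sub_distrib]
    rw [← Real.log_prod (fun i _ => (hposNP' i).ne'),
      ← Real.log_prod (fun i _ => (hposN i).ne')]
    rw [prod_sv hdetNP', prod_sv hdetN, det_mul, norm_mul]
    rw [Real.log_mul (norm_ne_zero_iff.2 (by exact_mod_cast hdetN.ne_zero))
      (norm_ne_zero_iff.2 (by exact_mod_cast hdetP'.ne_zero))]
    have habs : ‖(synth U d').det‖ = ∏ j, d' j := by
      rw [synth_det hU]
      rw [show (∏ j, ((d' j):ℂ)) = (((∏ j, d' j : ℝ)):ℂ) by push_cast; rfl]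
      rw [Complex.norm_real, Real.norm_eq_abs]
      rw [abs_of_nonneg (Finset.prod_nonneg
        (fun j _ => le_trans zero_le_one (hd'1 j)))]
    rw [habs, Real.log_prod (fun j _ => (lt_of_lt_of_le one_pos (hd'1 j)).ne')]
    ring
  -- step 3 : identify the sorted sum
  have hmultiset : Multiset.map sval univ.val = Multiset.map (sv B) univ.val := by
    have h1 := lam_multiset hH.1
    have h2 := congrArg (Multiset.map Real.sqrt) h1
    rw [Multiset.map_map, Multiset.map_map] at h2
    exact h2.symm
  have step3 : ∑ j ∈ univ, Real.log (d' j)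
      = ∑ j ∈ univ, Real.log (max (sv B j) s) - (n : ℝ) * Real.log s := by
    have h1 : ∀ j, Real.log (d' j) = Real.log (max (sval j) s) - Real.log s := by
      intro j
      rw [hd'def]
      exact Real.log_div (by positivity) hs.ne'
    rw [Finset.sum_congr rfl (fun j _ => h1 j), Finset.sum_sub_distrib,
      Finset.sum_const, Finset.card_univ, Fintype.card_fin, nsmul_eq_mul]
    congr 1
    exact sum_comp_eq_of_multiset hmultiset (fun t => Real.log (max t s))
  -- step 4 : sorted splitting
  have step4 : ∑ j ∈ univ, Real.log (max (sv B j) s)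
      = ∑ j ∈ Finset.Iic k, Real.log (sv B j) + ((n : ℝ) - ((k:ℕ) + 1)) * Real.log s := by
    rw [← Finset.sum_add_sum_compl (Finset.Iic k) (fun j => Real.log (max (sv B j) s))]
    have h1 : ∀ j ∈ Finset.Iic k, Real.log (max (sv B j) s) = Real.log (sv B j) := by
      intro j hj
      rw [Finset.mem_Iic] at hj
      rw [max_eq_left (by rw [hsdef]; exact sv_antitone B hj)]
    have h2 : ∀ j ∈ (Finset.Iic k)ᶜ, Real.log (max (sv B j) s) = Real.log s := by
      intro j hj
      rw [Finset.mem_compl, Finset.mem_Iic, not_le] at hj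
      rw [max_eq_right (by rw [hsdef]; exact sv_antitone B hj.le)]
    rw [Finset.sum_congr rfl h1, Finset.sum_congr rfl h2, Finset.sum_const, nsmul_eq_mul]
    have h3 : ((Finset.Iic k)ᶜ.card : ℝ) = (n : ℝ) - ((k:ℕ) + 1) := by
      rw [Finset.card_compl, Fin.card_Iic, Fintype.card_fin]
      have : (k:ℕ) + 1 ≤ n := k.2
      push_cast [Nat.cast_sub this]
      ring
    rw [h3]
  calc ∑ i ∈ S, (Real.log (sv (A * B) i) - Real.log (sv A i))
      ≤ ((k:ℕ) + 1 : ℝ) * Real.log s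
        + ∑ i ∈ univ, (Real.log (sv (N * synth U d') i) - Real.log (sv N i)) := step1
    _ = ((k:ℕ) + 1 : ℝ) * Real.log s + (∑ j ∈ univ, Real.log (max (sv B j) s)
        - (n : ℝ) * Real.log s) := by rw [step2, step3]
    _ = ∑ j ∈ Finset.Iic k, Real.log (sv B j) := by rw [step4]; ring
end CP
end S7
section S8
open Matrix Finset Polynomial
namespace CP
variable {n : ℕ}

lemma abel_nonpos (N : ℕ) (f g : ℕ → ℝ) (hf : ∀ i, i + 1 < N → f (i+1) ≤ f i)
    (hg : ∀ m, m ≤ N → ∑ j ∈ Finset.range m, g j ≤ 0)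
    (htot : ∑ j ∈ Finset.range N, g j = 0) :
    ∑ i ∈ Finset.range N, f i * g i ≤ 0 := by
  have h := Finset.sum_range_by_parts f g N
  simp only [smul_eq_mul] at h
  rw [h, htot, mul_zero, zero_sub, neg_nonpos]
  apply Finset.sum_nonneg
  intro i hi
  rw [Finset.mem_range] at hi
  have h1 : f (i+1) - f i ≤ 0 := by
    have := hf i (by omega)
    linarith
  have h2 : ∑ j ∈ Finset.range (i+1), g j ≤ 0 := hg (i+1) (by omega)
  nlinarith

/-- descending sort of a tuple -/
noncomputable def dsort (f : Fin n → ℝ) : Fin n → ℝ :=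
  fun i => (f ∘ (Tuple.sort f)) i.rev

lemma dsort_antitone (f : Fin n → ℝ) : Antitone (dsort f) :=
  fun i j hij => Tuple.monotone_sort f (Fin.rev_le_rev.2 hij)

lemma dsort_multiset (f : Fin n → ℝ) :
    Multiset.map (dsort f) univ.val = Multiset.map f univ.val := by
  have : dsort f = f ∘ ((Fin.revPerm.trans (Tuple.sort f)) : Equiv.Perm (Fin n)) := by
    funext i; rfl
  rw [this]
  have h2 : (Multiset.map (⇑(Fin.revPerm.trans (Tuple.sort f))) univ.val) = univ.val := by
    have := Finset.map_univ_equiv ((Fin.revPerm.trans (Tuple.sort f)) : Equiv.Perm (Fin n))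
    calc (Multiset.map (⇑(Fin.revPerm.trans (Tuple.sort f))) univ.val)
        = (univ.map ((Fin.revPerm.trans (Tuple.sort f)).toEmbedding)).val := rfl
      _ = univ.val := by rw [this]
  calc Multiset.map (f ∘ _) univ.val
      = Multiset.map f (Multiset.map _ univ.val) := by rw [Multiset.map_map]
    _ = _ := by rw [h2]

/-- partial sums of the descending sort are sums over a subset -/
lemma dsort_partial_sum (f : Fin n → ℝ) (k : Fin n) :
    ∃ S : Finset (Fin n), S.card = (k:ℕ) + 1 ∧
      ∑ i ∈ Finset.Iic k, dsort f i = ∑ i ∈ S, f i := by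
  classical
  set π : Equiv.Perm (Fin n) := Fin.revPerm.trans (Tuple.sort f) with hπ
  refine ⟨(Finset.Iic k).image π, ?_, ?_⟩
  · rw [Finset.card_image_of_injective _ π.injective, Fin.card_Iic]
  · rw [Finset.sum_image (fun x _ y _ h => π.injective h)]
    rfl

/-- the core ℓ² majorization bound -/
lemma core_sq {A B : Matrix (Fin n) (Fin n) ℂ} (hA : IsUnit A.det) (hB : IsUnit B.det) :
    ∑ i, (Real.log (sv (A * B) i) - Real.log (sv A i))^2
      ≤ ∑ i, (Real.log (sv B i))^2 := by
  classical
  set d : Fin n → ℝ := fun i => Real.log (sv (A * B) i) - Real.log (sv A i) with hd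
  set c : Fin n → ℝ := fun i => Real.log (sv B i) with hc
  set D : Fin n → ℝ := dsort d with hD
  have hDanti : Antitone D := dsort_antitone d
  have hcanti : Antitone c := by
    intro i j hij
    exact Real.log_le_log (sv_pos hB j) (sv_antitone B hij)
  have hmult : Multiset.map D univ.val = Multiset.map d univ.val := dsort_multiset d
  -- total sums agree
  have htotal : ∑ i, d i = ∑ i, c i := by
    have h1 : ∑ i, Real.log (sv (A * B) i) = Real.log ‖(A * B).det‖ := by
      rw [← prod_sv (by rw [det_mul]; exact hA.mul hB), Real.log_prod]
      exact fun i _ => (sv_pos (by rw [det_mul]; exact hA.mul hB) i).ne'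
    have h2 : ∑ i, Real.log (sv A i) = Real.log ‖A.det‖ := by
      rw [← prod_sv hA, Real.log_prod]
      exact fun i _ => (sv_pos hA i).ne'
    have h3 : ∑ i, Real.log (sv B i) = Real.log ‖B.det‖ := by
      rw [← prod_sv hB, Real.log_prod]
      exact fun i _ => (sv_pos hB i).ne'
    have h4 : ‖(A * B).det‖ = ‖A.det‖ * ‖B.det‖ := by
      rw [det_mul, norm_mul]
    have h5 : Real.log ‖(A * B).det‖
        = Real.log ‖A.det‖ + Real.log ‖B.det‖ := by
      rw [h4, Real.log_mul (norm_ne_zero_iff.2 (by exact_mod_cast hA.ne_zero))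
        (norm_ne_zero_iff.2 (by exact_mod_cast hB.ne_zero))]
    rw [hd, hc]
    rw [Finset.sum_sub_distrib, h1, h2, h3, h5]
    ring
  have hDtot : ∑ i, D i = ∑ i, d i := by
    have := sum_comp_eq_of_multiset hmult id
    simpa using this
  -- partial sums
  have hpartial : ∀ k : Fin n, ∑ i ∈ Finset.Iic k, D i ≤ ∑ i ∈ Finset.Iic k, c i := by
    intro k
    obtain ⟨S, hScard, hSsum⟩ := dsort_partial_sum d k
    rw [hSsum]
    exact lidskii_subset hA hB k S hScard
  -- Abel: ∑ D (D - c) ≤ 0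
  set F : ℕ → ℝ := fun m => if h : m < n then D ⟨m, h⟩ else 0 with hF
  set G : ℕ → ℝ := fun m => if h : m < n then D ⟨m, h⟩ - c ⟨m, h⟩ else 0 with hG
  have hrange_eq : ∀ m, m ≤ n → ∑ j ∈ Finset.range m, G j
      = ∑ j ∈ univ.filter (fun j : Fin n => (j:ℕ) < m), (D j - c j) := by
    intro m hm
    induction m with
    | zero => simp
    | succ t ih =>
      have ht : t < n := by omega
      rw [Finset.sum_range_succ, ih (by omega)]
      have hins : univ.filter (fun j : Fin n => (j:ℕ) < t + 1)
          = insert ⟨t, ht⟩ (univ.filter (fun j : Fin n => (j:ℕ) < t)) := by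
        ext j
        simp only [Finset.mem_filter, Finset.mem_insert, Finset.mem_univ, true_and,
          Fin.ext_iff]
        omega
      rw [hins, Finset.sum_insert (by simp)]
      have : G t = D ⟨t, ht⟩ - c ⟨t, ht⟩ := by rw [hG]; simp [ht]
      rw [this]
      ring
  have hfilter_Iic : ∀ k : Fin n,
      univ.filter (fun j : Fin n => (j:ℕ) < (k:ℕ) + 1) = Finset.Iic k := by
    intro k
    ext j
    simp only [Finset.mem_filter, Finset.mem_univ, true_and, Finset.mem_Iic, Fin.le_def]
    omega
  have habel : ∑ i, D i * (D i - c i) ≤ 0 := by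
    have h0 : ∑ i, D i * (D i - c i) = ∑ j ∈ Finset.range n, F j * G j := by
      rw [Finset.sum_range (fun j => F j * G j)]
      apply Finset.sum_congr rfl
      intro i _
      rw [hF, hG]
      simp [i.2]
    rw [h0]
    apply abel_nonpos n F G
    · intro i hi
      rw [hF]
      have h1 : i < n := by omega
      have h2 : i + 1 < n := hi
      simp only [h1, h2, dif_pos]
      exact hDanti (by simp [Fin.le_def])
    · intro m hm
      rw [hrange_eq m hm]
      rcases Nat.eq_zero_or_pos m with h0 | h0
      · subst h0; simp
      · have hm1 : m - 1 < n := by omega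
        set k : Fin n := ⟨m - 1, hm1⟩ with hk
        have : m = (k:ℕ) + 1 := by rw [hk]; simp; omega
        rw [this, hfilter_Iic k, Finset.sum_sub_distrib]
        have := hpartial k
        linarith
    · rw [hrange_eq n le_rfl]
      have : univ.filter (fun j : Fin n => (j:ℕ) < n) = univ := by
        ext j; simp [j.2]
      rw [this, Finset.sum_sub_distrib]
      rw [hDtot, htotal]
      ring
  -- Cauchy–Schwarz wrap-up
  have hDsq : ∑ i, D i ^ 2 = ∑ i, d i ^ 2 := sum_comp_eq_of_multiset hmult (fun t => t^2)
  have hCS := Finset.sum_mul_sq_le_sq_mul_sq univ D c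
  have hDD : ∑ i, D i ^ 2 ≤ ∑ i, D i * c i := by
    have h1 : ∑ i, D i * (D i - c i) = ∑ i, D i ^ 2 - ∑ i, D i * c i := by
      rw [← Finset.sum_sub_distrib]
      apply Finset.sum_congr rfl
      intro i _
      ring
    rw [h1] at habel
    linarith
  have hfinal : ∑ i, D i ^ 2 ≤ ∑ i, c i ^ 2 := by
    rcases eq_or_lt_of_le (Finset.sum_nonneg (fun i _ => sq_nonneg (D i)) :
        (0:ℝ) ≤ ∑ i, D i ^ 2) with h0 | h0
    · rw [← h0]
      exact Finset.sum_nonneg (fun i _ => sq_nonneg (c i))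
    · nlinarith
  calc ∑ i, d i ^ 2 = ∑ i, D i ^ 2 := hDsq.symm
    _ ≤ ∑ i, c i ^ 2 := hfinal

end CP
end S8
section S9
open Matrix Finset
namespace CP
variable {n : ℕ}

lemma cartan_eq (M : Matrix (Fin n) (Fin n) ℂ) :
    cartanProj M = WithLp.toLp 2 (fun i => Real.log (sv M i)) := rfl

lemma cartan_transpose {M : Matrix (Fin n) (Fin n) ℂ} (hM : IsUnit M.det) :
    cartanProj (Mᵀ) = cartanProj M := by
  ext i
  show Real.log (sv (Mᵀ) i) = Real.log (sv M i)
  rw [sv_transpose hM]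

lemma norm_ineq {A B : Matrix (Fin n) (Fin n) ℂ} (hA : IsUnit A.det) (hB : IsUnit B.det) :
    ‖(cartanProj (A * B) - cartanProj A : EuclideanSpace ℝ (Fin n))‖
      ≤ ‖(cartanProj B : EuclideanSpace ℝ (Fin n))‖ := by
  rw [EuclideanSpace.norm_eq, EuclideanSpace.norm_eq]
  apply Real.sqrt_le_sqrt
  have hcore := core_sq hA hB
  have h1 : ∀ i, ‖(cartanProj (A * B) - cartanProj A : EuclideanSpace ℝ (Fin n)) i‖^2
      = (Real.log (sv (A * B) i) - Real.log (sv A i))^2 := by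
    intro i
    have h2 : (cartanProj (A * B) - cartanProj A : EuclideanSpace ℝ (Fin n)) i
        = Real.log (sv (A * B) i) - Real.log (sv A i) := rfl
    rw [h2, Real.norm_eq_abs, sq_abs]
  have h3 : ∀ i, ‖(cartanProj B : EuclideanSpace ℝ (Fin n)) i‖^2
      = (Real.log (sv B i))^2 := by
    intro i
    rw [show (cartanProj B : EuclideanSpace ℝ (Fin n)) i = Real.log (sv B i) from rfl,
      Real.norm_eq_abs, sq_abs]
  rw [Finset.sum_congr rfl (fun i _ => h1 i), Finset.sum_congr rfl (fun i _ => h3 i)]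
  exact hcore

end CP


theorem stmt_12 (n : ℕ) (g g' : SpecialLinearGroup (Fin n) ℂ) :
    ‖cartanProj ((g * g' : SpecialLinearGroup (Fin n) ℂ) : Matrix (Fin n) (Fin n) ℂ)
        - cartanProj (g : Matrix (Fin n) (Fin n) ℂ)‖
      ≤ ‖cartanProj (g' : Matrix (Fin n) (Fin n) ℂ)‖ ∧
    ‖cartanProj ((g * g' : SpecialLinearGroup (Fin n) ℂ) : Matrix (Fin n) (Fin n) ℂ)
        - cartanProj (g' : Matrix (Fin n) (Fin n) ℂ)‖
      ≤ ‖cartanProj (g : Matrix (Fin n) (Fin n) ℂ)‖ := by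
  have hdg : IsUnit ((g : Matrix (Fin n) (Fin n) ℂ)).det := by
    rw [Matrix.SpecialLinearGroup.det_coe]; exact isUnit_one
  have hdg' : IsUnit ((g' : Matrix (Fin n) (Fin n) ℂ)).det := by
    rw [Matrix.SpecialLinearGroup.det_coe]; exact isUnit_one
  have hcoe : ((g * g' : SpecialLinearGroup (Fin n) ℂ) : Matrix (Fin n) (Fin n) ℂ)
      = (g : Matrix (Fin n) (Fin n) ℂ) * (g' : Matrix (Fin n) (Fin n) ℂ) := rfl
  constructor
  · rw [hcoe]
    exact CP.norm_ineq hdg hdg'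
  · rw [hcoe]
    have hdgT : IsUnit ((g : Matrix (Fin n) (Fin n) ℂ)ᵀ).det := by
      rw [Matrix.det_transpose]; exact hdg
    have hdg'T : IsUnit ((g' : Matrix (Fin n) (Fin n) ℂ)ᵀ).det := by
      rw [Matrix.det_transpose]; exact hdg'
    have h := CP.norm_ineq hdg'T hdgT
    rw [← Matrix.transpose_mul] at h
    rw [CP.cartan_transpose (by rw [Matrix.det_mul]; exact hdg.mul hdg'),
      CP.cartan_transpose hdg', CP.cartan_transpose hdg] at h
    exact h
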